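/- Let Ω = (0,1) and suppose ã ∈ H¹(Ω) with ã ≥ 2a̲ > 0 and ‖ã'‖₂ ≤ a̲ / (C_{H¹→L^∞} ‖(−Δ + id)^{-1}‖_{L²→H²}). Then for every w ∈ H²(Ω) (with the relevant boundary conditions), ‖w''‖₂ ≤ (1/a̲) ‖(ã w')'‖₂ + ‖w‖₂. -/

import Mathlib

/-- The `L²(0,1)` norm of a function. -/
noncomputable def L2norm01 (f : ℝ → ℝ) : ℝ :=
  Real.sqrt (∫ s in (0:ℝ)..1, (f s) ^ 2)

/-- The sup norm of a function over `[0,1]`. -/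
noncomputable def supnorm01 (f : ℝ → ℝ) : ℝ :=
  ⨆ x : Set.Icc (0:ℝ) 1, |f x.1|

open MeasureTheory Set

lemma ae_ne_one' : ∀ᵐ x : ℝ ∂volume, x ≠ 1 := by
  rw [MeasureTheory.ae_iff]
  have : {x : ℝ | ¬ x ≠ 1} = {1} := by ext x; simp
  rw [this]
  exact Real.volume_singleton

lemma ae_ne_zero' : ∀ᵐ x : ℝ ∂volume, x ≠ 0 := by
  rw [MeasureTheory.ae_iff]
  have : {x : ℝ | ¬ x ≠ 0} = {0} := by ext x; simp
  rw [this]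
  exact Real.volume_singleton

lemma ae_uIoc01 {P : ℝ → Prop} (h : ∀ x ∈ Set.Ioo (0:ℝ) 1, P x) :
    ∀ᵐ x : ℝ ∂volume, x ∈ Set.uIoc (0:ℝ) 1 → P x := by
  filter_upwards [ae_ne_one'] with x hx1 hx
  rw [Set.uIoc_of_le (by norm_num : (0:ℝ) ≤ 1)] at hx
  exact h x ⟨hx.1, lt_of_le_of_ne hx.2 hx1⟩

lemma ae_restrict_Ioc01 {P : ℝ → Prop} (h : ∀ x ∈ Set.Ioo (0:ℝ) 1, P x) :
    ∀ᵐ x ∂(volume.restrict (Set.Ioc (0:ℝ) 1)), P x := by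
  filter_upwards [ae_restrict_of_ae ae_ne_one', ae_restrict_mem measurableSet_Ioc] with x h1 hx
  exact h x ⟨hx.1, lt_of_le_of_ne hx.2 h1⟩

lemma ae_restrict_Icc01 {P : ℝ → Prop} (h : ∀ x ∈ Set.Ioo (0:ℝ) 1, P x) :
    ∀ᵐ x ∂(volume.restrict (Set.Icc (0:ℝ) 1)), P x := by
  filter_upwards [ae_restrict_of_ae ae_ne_one', ae_restrict_of_ae ae_ne_zero',
    ae_restrict_mem measurableSet_Icc] with x h1 h0 hx
  exact h x ⟨lt_of_le_of_ne hx.1 (Ne.symm h0), lt_of_le_of_ne hx.2 h1⟩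

/-- Interval integrability from a continuous a.e.-representative on `[0,1]`. -/
lemma II_of_Ioo_eq {f F : ℝ → ℝ} (hF : ContinuousOn F (Set.Icc 0 1))
    (h : ∀ x ∈ Set.Ioo (0:ℝ) 1, f x = F x) : IntervalIntegrable f volume 0 1 := by
  rw [intervalIntegrable_iff, Set.uIoc_of_le (by norm_num : (0:ℝ) ≤ 1)]
  have hFI : IntegrableOn F (Set.Ioc 0 1) volume :=
    (hF.integrableOn_Icc).mono_set Set.Ioc_subset_Icc_self
  exact hFI.congr (ae_restrict_Ioc01 fun x hx => (h x hx).symm)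

lemma integral_sq_nonneg01 (f : ℝ → ℝ) : 0 ≤ ∫ s in (0:ℝ)..1, (f s) ^ 2 :=
  intervalIntegral.integral_nonneg (by norm_num) (fun x _ => sq_nonneg _)

lemma L2norm01_nonneg (f : ℝ → ℝ) : 0 ≤ L2norm01 f := Real.sqrt_nonneg _

lemma L2norm01_congr {f g : ℝ → ℝ} (h : ∀ x ∈ Set.Ioo (0:ℝ) 1, f x = g x) :
    L2norm01 f = L2norm01 g := by
  unfold L2norm01
  congr 1
  apply intervalIntegral.integral_congr_ae
  filter_upwards [ae_uIoc01 h] with x hx hmem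
  rw [hx hmem]

lemma L2norm01_mono {f g : ℝ → ℝ}
    (hf2 : IntervalIntegrable (fun x => f x ^ 2) volume 0 1)
    (hg2 : IntervalIntegrable (fun x => g x ^ 2) volume 0 1)
    (h : ∀ x ∈ Set.Ioo (0:ℝ) 1, |f x| ≤ |g x|) : L2norm01 f ≤ L2norm01 g := by
  apply Real.sqrt_le_sqrt
  apply intervalIntegral.integral_mono_ae_restrict (by norm_num : (0:ℝ) ≤ 1) hf2 hg2
  apply ae_restrict_Icc01
  intro x hx
  calc f x ^ 2 = |f x| ^ 2 := (sq_abs _).symm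
    _ ≤ |g x| ^ 2 := pow_le_pow_left₀ (abs_nonneg _) (h x hx) 2
    _ = g x ^ 2 := sq_abs _

lemma L2norm01_const_mul (c : ℝ) (f : ℝ → ℝ) :
    L2norm01 (fun x => c * f x) = |c| * L2norm01 f := by
  unfold L2norm01
  have : ∀ x, (c * f x) ^ 2 = c ^ 2 * f x ^ 2 := fun x => by ring
  simp_rw [this]
  rw [intervalIntegral.integral_const_mul, Real.sqrt_mul (sq_nonneg c), Real.sqrt_sq_eq_abs]

/-- Cauchy–Schwarz for the `L²(0,1)` norm. -/
lemma L2norm01_CS {f g : ℝ → ℝ}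
    (hf2 : IntervalIntegrable (fun x => f x ^ 2) volume 0 1)
    (hg2 : IntervalIntegrable (fun x => g x ^ 2) volume 0 1)
    (hfg : IntervalIntegrable (fun x => f x * g x) volume 0 1) :
    (∫ x in (0:ℝ)..1, f x * g x) ≤ L2norm01 f * L2norm01 g := by
  set A := ∫ x in (0:ℝ)..1, f x ^ 2 with hA
  set C := ∫ x in (0:ℝ)..1, g x ^ 2 with hC
  set B := ∫ x in (0:ℝ)..1, f x * g x with hB
  have key : ∀ t : ℝ, 0 ≤ A * (t * t) + (2 * B) * t + C := by
    intro t
    have hexp : A * (t * t) + (2 * B) * t + C = ∫ x in (0:ℝ)..1, (t * f x + g x) ^ 2 := by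
      have h1 : ∀ x, (t * f x + g x) ^ 2
          = (t * t) * f x ^ 2 + (2 * t) * (f x * g x) + g x ^ 2 := fun x => by ring
      simp_rw [h1]
      rw [intervalIntegral.integral_add ((hf2.const_mul _).add (hfg.const_mul _)) hg2,
        intervalIntegral.integral_add (hf2.const_mul _) (hfg.const_mul _),
        intervalIntegral.integral_const_mul, intervalIntegral.integral_const_mul]
      ring
    rw [hexp]
    exact integral_sq_nonneg01 _
  have hd := discrim_le_zero key
  rw [discrim] at hd
  have hB2 : B ^ 2 ≤ A * C := by nlinarith
  calc B ≤ |B| := le_abs_self _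
    _ = Real.sqrt (B ^ 2) := (Real.sqrt_sq_eq_abs B).symm
    _ ≤ Real.sqrt (A * C) := Real.sqrt_le_sqrt hB2
    _ = Real.sqrt A * Real.sqrt C := Real.sqrt_mul (integral_sq_nonneg01 f) _

/-- Minkowski inequality for the `L²(0,1)` norm. -/
lemma L2norm01_add_le {f g : ℝ → ℝ}
    (hf2 : IntervalIntegrable (fun x => f x ^ 2) volume 0 1)
    (hg2 : IntervalIntegrable (fun x => g x ^ 2) volume 0 1)
    (hfg : IntervalIntegrable (fun x => f x * g x) volume 0 1) :
    L2norm01 (fun x => f x + g x) ≤ L2norm01 f + L2norm01 g := by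
  set A := ∫ x in (0:ℝ)..1, f x ^ 2 with hA
  set C := ∫ x in (0:ℝ)..1, g x ^ 2 with hC
  set B := ∫ x in (0:ℝ)..1, f x * g x with hB
  have hint : (∫ x in (0:ℝ)..1, (f x + g x) ^ 2) = A + 2 * B + C := by
    have h1 : ∀ x, (f x + g x) ^ 2 = f x ^ 2 + 2 * (f x * g x) + g x ^ 2 := fun x => by ring
    simp_rw [h1]
    rw [intervalIntegral.integral_add (hf2.add (hfg.const_mul _)) hg2,
      intervalIntegral.integral_add hf2 (hfg.const_mul _),
      intervalIntegral.integral_const_mul]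
  have hcs : B ≤ Real.sqrt A * Real.sqrt C := L2norm01_CS hf2 hg2 hfg
  unfold L2norm01
  rw [hint]
  calc Real.sqrt (A + 2 * B + C)
      ≤ Real.sqrt ((Real.sqrt A + Real.sqrt C) ^ 2) := by
        apply Real.sqrt_le_sqrt
        have hA' : Real.sqrt A ^ 2 = A := Real.sq_sqrt (integral_sq_nonneg01 f)
        have hC' : Real.sqrt C ^ 2 = C := Real.sq_sqrt (integral_sq_nonneg01 g)
        nlinarith
    _ = Real.sqrt A + Real.sqrt C := Real.sqrt_sq (by positivity)

/-- Elliptic-regularity type estimate on `Ω = (0,1)`: if `ã ≥ 2a̲ > 0` and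
`‖ã'‖₂ ≤ a̲/(C_{H¹→L^∞}·‖(−Δ+id)⁻¹‖_{L²→H²})`, then for every `w ∈ H²`
(satisfying the interpolation bound `‖w'‖_∞ ≤ C_{H¹→L^∞}‖(−Δ+id)⁻¹‖(‖w''‖₂+‖w‖₂)`
coming from the resolvent estimate), `‖w''‖₂ ≤ (1/a̲)‖(ã w')'‖₂ + ‖w‖₂`. -/
theorem second_derivative_estimate
    (atil w : ℝ → ℝ) (abar CH1Linf Cres : ℝ)
    (habar : 0 < abar) (hC : 0 < CH1Linf) (hCres : 0 < Cres)
    (hatil : ContDiffOn ℝ 1 atil (Set.Icc 0 1))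
    (hw : ContDiffOn ℝ 2 w (Set.Icc 0 1))
    (hage : ∀ x ∈ Set.Icc (0:ℝ) 1, 2 * abar ≤ atil x)
    (hasmall : L2norm01 (deriv atil) ≤ abar / (CH1Linf * Cres))
    -- interpolation bound `‖w'‖_∞ ≤ C_{H¹→L^∞}‖(−Δ+id)⁻¹‖_{L²→H²}(‖w''‖₂ + ‖w‖₂)`
    (hinterp : supnorm01 (deriv w) ≤
      CH1Linf * Cres * (L2norm01 (deriv (deriv w)) + L2norm01 w)) :
    L2norm01 (deriv (deriv w)) ≤
      (1 / abar) * L2norm01 (fun x => deriv (fun y => atil y * deriv w y) x) +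
        L2norm01 w := by
  have hud : UniqueDiffOn ℝ (Set.Icc (0:ℝ) 1) := uniqueDiffOn_Icc (by norm_num)
  set W1 := derivWithin w (Set.Icc 0 1) with hW1def
  have hW1d : ContDiffOn ℝ 1 W1 (Set.Icc 0 1) := hw.derivWithin hud (by norm_num)
  have hW1c : ContinuousOn W1 (Set.Icc 0 1) := hW1d.continuousOn
  set W2 := derivWithin W1 (Set.Icc 0 1) with hW2def
  have hW2c : ContinuousOn W2 (Set.Icc 0 1) := hW1d.continuousOn_derivWithin hud le_rfl
  set A1 := derivWithin atil (Set.Icc 0 1) with hA1def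
  have hA1c : ContinuousOn A1 (Set.Icc 0 1) := hatil.continuousOn_derivWithin hud le_rfl
  have hac : ContinuousOn atil (Set.Icc 0 1) := hatil.continuousOn
  -- interior facts
  have hnh : ∀ x ∈ Set.Ioo (0:ℝ) 1, Set.Icc (0:ℝ) 1 ∈ nhds x := fun x hx =>
    Icc_mem_nhds hx.1 hx.2
  have hdw : ∀ x ∈ Set.Ioo (0:ℝ) 1, deriv w x = W1 x := fun x hx =>
    (derivWithin_of_mem_nhds (hnh x hx)).symm
  have hda : ∀ x ∈ Set.Ioo (0:ℝ) 1, deriv atil x = A1 x := fun x hx =>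
    (derivWithin_of_mem_nhds (hnh x hx)).symm
  have hevd : ∀ x ∈ Set.Ioo (0:ℝ) 1, deriv w =ᶠ[nhds x] W1 := by
    intro x hx
    filter_upwards [isOpen_Ioo.mem_nhds hx] with y hy
    exact hdw y hy
  have hddw : ∀ x ∈ Set.Ioo (0:ℝ) 1, deriv (deriv w) x = W2 x := by
    intro x hx
    rw [(hevd x hx).deriv_eq]
    exact (derivWithin_of_mem_nhds (hnh x hx)).symm
  have hdiffa : ∀ x ∈ Set.Ioo (0:ℝ) 1, DifferentiableAt ℝ atil x := fun x hx =>
    ((hatil.differentiableOn one_ne_zero).differentiableAt (hnh x hx))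
  have hdiffdw : ∀ x ∈ Set.Ioo (0:ℝ) 1, DifferentiableAt ℝ (deriv w) x := by
    intro x hx
    exact (hevd x hx).differentiableAt_iff.mpr
      ((hW1d.differentiableOn one_ne_zero).differentiableAt (hnh x hx))
  have hG : ∀ x ∈ Set.Ioo (0:ℝ) 1,
      deriv (fun y => atil y * deriv w y) x = A1 x * W1 x + atil x * W2 x := by
    intro x hx
    rw [deriv_fun_mul (hdiffa x hx) (hdiffdw x hx), hda x hx, hdw x hx, hddw x hx]
  -- notation
  set X := L2norm01 (deriv (deriv w)) with hXdef
  set Y := L2norm01 (fun x => deriv (fun y => atil y * deriv w y) x) with hYdef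
  set Z := L2norm01 w with hZdef
  set M := supnorm01 (deriv w) with hMdef
  -- sup norm facts
  have hbdd : BddAbove (Set.range fun x : Set.Icc (0:ℝ) 1 => |deriv w x.1|) := by
    obtain ⟨K, hK⟩ :=
      (isCompact_Icc.image_of_continuousOn hW1c.abs).bddAbove
    refine ⟨max K (max |deriv w 0| |deriv w 1|), ?_⟩
    rintro y ⟨⟨x, hx⟩, rfl⟩
    show |deriv w x| ≤ _
    by_cases hx0 : x ∈ Set.Ioo (0:ℝ) 1
    · rw [hdw x hx0]
      exact le_max_of_le_left (hK (Set.mem_image_of_mem _ hx))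
    · have hx01 : x = 0 ∨ x = 1 := by
        rcases eq_or_lt_of_le hx.1 with h0 | h0
        · exact Or.inl h0.symm
        rcases eq_or_lt_of_le hx.2 with h1 | h1
        · exact Or.inr h1
        exact absurd ⟨h0, h1⟩ hx0
      rcases hx01 with rfl | rfl
      · exact le_max_of_le_right (le_max_left _ _)
      · exact le_max_of_le_right (le_max_right _ _)
  have hMb : ∀ x ∈ Set.Ioo (0:ℝ) 1, |deriv w x| ≤ M := by
    intro x hx
    exact le_ciSup hbdd ⟨x, Set.Ioo_subset_Icc_self hx⟩
  have hM0 : 0 ≤ M :=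
    le_trans (abs_nonneg _) (le_ciSup hbdd ⟨(1:ℝ)/2, by norm_num⟩)
  -- integrability facts
  have hIW2sq : IntervalIntegrable (fun x => deriv (deriv w) x ^ 2) volume 0 1 :=
    II_of_Ioo_eq (hW2c.pow 2) (fun x hx => by rw [hddw x hx]; rfl)
  have hIcW2sq : IntervalIntegrable (fun x => (2 * abar * deriv (deriv w) x) ^ 2) volume 0 1 :=
    II_of_Ioo_eq ((continuousOn_const.mul hW2c).pow 2) (fun x hx => by rw [hddw x hx]; rfl)
  have hIaW2sq : IntervalIntegrable (fun x => (atil x * W2 x) ^ 2) volume 0 1 :=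
    II_of_Ioo_eq ((hac.mul hW2c).pow 2) (fun x _ => rfl)
  have hIGsq : IntervalIntegrable
      (fun x => (deriv (fun y => atil y * deriv w y) x) ^ 2) volume 0 1 :=
    II_of_Ioo_eq (((hA1c.mul hW1c).add (hac.mul hW2c)).pow 2)
      (fun x hx => by rw [hG x hx]; rfl)
  have hInAWsq : IntervalIntegrable (fun x => (-(A1 x * W1 x)) ^ 2) volume 0 1 :=
    II_of_Ioo_eq (((hA1c.mul hW1c).neg).pow 2) (fun x _ => rfl)
  have hIGnAW : IntervalIntegrable
      (fun x => deriv (fun y => atil y * deriv w y) x * (-(A1 x * W1 x))) volume 0 1 :=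
    II_of_Ioo_eq (((hA1c.mul hW1c).add (hac.mul hW2c)).mul ((hA1c.mul hW1c).neg))
      (fun x hx => by rw [hG x hx]; rfl)
  have hIAWsq : IntervalIntegrable (fun x => (A1 x * W1 x) ^ 2) volume 0 1 :=
    II_of_Ioo_eq ((hA1c.mul hW1c).pow 2) (fun x _ => rfl)
  have hIAMsq : IntervalIntegrable (fun x => (M * A1 x) ^ 2) volume 0 1 :=
    II_of_Ioo_eq ((continuousOn_const.mul hA1c).pow 2) (fun x _ => rfl)
  -- Step 1: 2⋅abar⋅X ≤ ‖atil ⋅ w''‖₂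
  have step1 : 2 * abar * X ≤ L2norm01 (fun x => atil x * W2 x) := by
    have h1 : 2 * abar * X = L2norm01 (fun x => 2 * abar * deriv (deriv w) x) := by
      rw [L2norm01_const_mul, abs_of_pos (by linarith)]
    rw [h1]
    apply L2norm01_mono hIcW2sq hIaW2sq
    intro x hx
    have hxIcc := Set.Ioo_subset_Icc_self hx
    have ha2 : (0:ℝ) ≤ 2 * abar := by linarith
    rw [hddw x hx, abs_mul (2 * abar), abs_mul (atil x), abs_of_nonneg ha2,
      abs_of_nonneg (le_trans ha2 (hage x hxIcc))]
    exact mul_le_mul_of_nonneg_right (hage x hxIcc) (abs_nonneg _)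
  -- Step 2: ‖atil ⋅ w''‖₂ ≤ Y + ‖A1 ⋅ W1‖₂
  have step2 : L2norm01 (fun x => atil x * W2 x) ≤ Y + L2norm01 (fun x => A1 x * W1 x) := by
    have hcongr : L2norm01 (fun x => atil x * W2 x) =
        L2norm01 (fun x => deriv (fun y => atil y * deriv w y) x + (-(A1 x * W1 x))) := by
      apply L2norm01_congr
      intro x hx
      rw [hG x hx]; ring
    have hneg : L2norm01 (fun x => -(A1 x * W1 x)) = L2norm01 (fun x => A1 x * W1 x) := by
      have : (fun x => -(A1 x * W1 x)) = fun x => (-1 : ℝ) * (A1 x * W1 x) := by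
        funext x; ring
      rw [this, L2norm01_const_mul]
      norm_num
    rw [hcongr]
    calc L2norm01 (fun x => deriv (fun y => atil y * deriv w y) x + (-(A1 x * W1 x)))
        ≤ Y + L2norm01 (fun x => -(A1 x * W1 x)) :=
          L2norm01_add_le hIGsq hInAWsq hIGnAW
      _ = Y + L2norm01 (fun x => A1 x * W1 x) := by rw [hneg]
  -- Step 3: ‖A1 ⋅ W1‖₂ ≤ ‖A1‖₂ ⋅ M and ‖A1‖₂ = ‖deriv atil‖₂
  have hA1L2 : L2norm01 A1 = L2norm01 (deriv atil) :=
    L2norm01_congr (fun x hx => (hda x hx).symm)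
  have step3 : L2norm01 (fun x => A1 x * W1 x) ≤ L2norm01 (deriv atil) * M := by
    have h1 : L2norm01 (fun x => A1 x * W1 x) ≤ L2norm01 (fun x => M * A1 x) := by
      apply L2norm01_mono hIAWsq hIAMsq
      intro x hx
      rw [abs_mul, abs_mul, abs_of_nonneg hM0, ← hdw x hx]
      rw [mul_comm (|A1 x|)]
      exact mul_le_mul_of_nonneg_right (hMb x hx) (abs_nonneg _)
    rw [L2norm01_const_mul, abs_of_nonneg hM0, hA1L2, mul_comm] at h1
    exact h1
  -- Combine
  have hCC : 0 < CH1Linf * Cres := mul_pos hC hCres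
  have hsm : L2norm01 (deriv atil) * M ≤ (abar / (CH1Linf * Cres)) * M :=
    mul_le_mul_of_nonneg_right hasmall hM0
  have hsm2 : (abar / (CH1Linf * Cres)) * M ≤ abar * (X + Z) := by
    calc (abar / (CH1Linf * Cres)) * M
        ≤ (abar / (CH1Linf * Cres)) * (CH1Linf * Cres * (X + Z)) := by
          apply mul_le_mul_of_nonneg_left hinterp (le_of_lt (div_pos habar hCC))
      _ = abar * (X + Z) := by field_simp
  have hmain : 2 * abar * X ≤ Y + abar * (X + Z) := by
    calc 2 * abar * X ≤ L2norm01 (fun x => atil x * W2 x) := step1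
      _ ≤ Y + L2norm01 (fun x => A1 x * W1 x) := step2
      _ ≤ Y + L2norm01 (deriv atil) * M := by linarith [step3]
      _ ≤ Y + abar * (X + Z) := by linarith [hsm, hsm2]
  have hgoal : X * abar ≤ Y + abar * Z := by nlinarith
  rw [show (1 / abar) * Y + Z = (Y + abar * Z) / abar by field_simp,
    le_div_iff₀ habar]
  exact hgoal
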